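/- arXiv:1904.00079 — 4 statements merged into one kernel-verified Lean document; each statement's English description precedes it below -/
import Mathlib

section
/- Let u ∈ V and let v ∈ anc(u) be an ancestor of u. Consider two sets of nodes R, R' ⊆ V such that (i) v ∈ R and v ∈ R'; (ii) subtree(u) ∩ R = subtree(u) ∩ R'; and (iii) path(u,v) ∩ R = path(u,v) ∩ R' = ∅. Then the partial benefits at u agree: pB_u(R) = pB_u(R'). -/
open scoped Classical

section TreeDefs

variable {V : Type*}

/-- The set of strict ancestors of `u` in the rooted tree given by `parent`. -/
def ancSet (parent : V → V) (u : V) : Set V :=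
  {v | v ≠ u ∧ ∃ n : ℕ, parent^[n] u = v}

/-- The set of nodes of the subtree rooted at `u` (including `u`). -/
def subtreeSet (parent : V → V) (u : V) : Set V :=
  {x | ∃ n : ℕ, parent^[n] x = u}

/-- The set of nodes strictly between `u` and its ancestor `v`. -/
def pathSet (parent : V → V) (u v : V) : Set V :=
  {w | w ∈ ancSet parent u ∧ v ∈ ancSet parent w}

/-- A node is internal if it has at least one child. -/
def isInternal (parent : V → V) (u : V) : Prop :=
  ∃ w, w ≠ u ∧ parent w = u

/-- `T` is binary with left-child map `lc` and right-child map `rc`. -/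
def isBinary (parent lc rc : V → V) : Prop :=
  ∀ u, isInternal parent u →
    lc u ≠ rc u ∧ parent (lc u) = u ∧ parent (rc u) = u ∧
    lc u ≠ u ∧ rc u ≠ u ∧
    ∀ w, w ≠ u → parent w = u → w = lc u ∨ w = rc u

/-- The usefulness indicator `I_q(u|R)` of node `u` for a query with
summed-out variables `Zq`, with respect to the materialized set `R`. -/
noncomputable def useful {α : Type*} (parent : V → V) (vars : V → Set α)
    (Zq : Set α) (u : V) (R : Set V) : ℝ :=
  if vars u ⊆ Zq ∧ ∀ v ∈ ancSet parent u ∩ R, ¬ vars v ⊆ Zq then 1 else 0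

/-- The expected usefulness `E[I(u|R)]` over the query distribution. -/
noncomputable def eInd {α Q : Type*} [Fintype Q] (parent : V → V) (vars : V → Set α)
    (Z : Q → Set α) (Pr : Q → ℝ) (u : V) (R : Set V) : ℝ :=
  ∑ q : Q, Pr q * useful parent vars (Z q) u R

/-- The utility `U(u) = Σ_{x ∈ subtree(u)} c(x)`. -/
noncomputable def util [Fintype V] (parent : V → V) (c : V → ℝ) (u : V) : ℝ :=
  ∑ x ∈ Finset.univ.filter (fun x => x ∈ subtreeSet parent u), c x

/-- The benefit `B(R) = Σ_{u ∈ R} E[I(u|R)] · U(u)`. -/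
noncomputable def benefit [Fintype V] {α Q : Type*} [Fintype Q]
    (parent : V → V) (vars : V → Set α) (Z : Q → Set α) (Pr : Q → ℝ)
    (c : V → ℝ) (R : Finset V) : ℝ :=
  ∑ u ∈ R, eInd parent vars Z Pr u (↑R) * util parent c u

/-- The partial benefit `pB_u(R) = Σ_{w ∈ R ∩ subtree(u)} E[I(w|R)] · U(w)`. -/
noncomputable def pB [Fintype V] {α Q : Type*} [Fintype Q]
    (parent : V → V) (vars : V → Set α) (Z : Q → Set α) (Pr : Q → ℝ)
    (c : V → ℝ) (u : V) (R : Finset V) : ℝ :=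
  ∑ w ∈ R.filter (fun w => w ∈ subtreeSet parent u),
    eInd parent vars Z Pr w (↑R) * util parent c w

end TreeDefs

section Aux

variable {V : Type*}

lemma cycle_root (root : V) (parent : V → V) (hroot : parent root = root)
    (hreach : ∀ u, ∃ n : ℕ, parent^[n] u = root) {u : V} {n : ℕ} (hn : n ≠ 0)
    (hcyc : parent^[n] u = u) : u = root := by
  obtain ⟨N, hN⟩ := hreach u
  have hmul : ∀ k : ℕ, parent^[k * n] u = u := by
    intro k
    induction k with
    | zero => simp
    | succ k ih =>
        rw [Nat.succ_mul, Function.iterate_add_apply, hcyc, ih]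
  have hle : N ≤ N * n := Nat.le_mul_of_pos_right N (Nat.pos_of_ne_zero hn)
  have : parent^[N * n] u = root := by
    have h1 : N * n = (N * n - N) + N := by omega
    rw [h1, Function.iterate_add_apply, hN, Function.iterate_fixed hroot]
  rw [hmul N] at this
  exact this

/-- Key direction: an offending ancestor for `R` yields one for `R'`. -/
lemma exists_mono {α : Type*} (root : V) (parent : V → V)
    (hroot : parent root = root) (hreach : ∀ u, ∃ n : ℕ, parent^[n] u = root)
    (vars : V → Set α)
    (hvars : ∀ u v : V, v ∈ ancSet parent u → vars u ⊆ vars v)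
    (u v : V) (hanc : v ∈ ancSet parent u)
    (R R' : Set V) (hvR' : v ∈ R')
    (hsub : subtreeSet parent u ∩ R = subtreeSet parent u ∩ R')
    (hpR : pathSet parent u v ∩ R = ∅)
    (w : V) (hw : w ∈ subtreeSet parent u) (Zq : Set α)
    (h : ∃ a, a ∈ ancSet parent w ∩ R ∧ vars a ⊆ Zq) :
    ∃ a, a ∈ ancSet parent w ∩ R' ∧ vars a ⊆ Zq := by
  obtain ⟨a, ⟨haw, haR⟩, haZ⟩ := h
  obtain ⟨m, hm⟩ := hw
  obtain ⟨hvu, j, hj⟩ := hanc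
  have hj0 : j ≠ 0 := by
    intro h0; rw [h0] at hj; exact hvu hj.symm
  -- v is a strict ancestor of w
  have hvw_it : parent^[j + m] w = v := by
    rw [Function.iterate_add_apply, hm, hj]
  have hvw : v ∈ ancSet parent w := by
    refine ⟨?_, j + m, hvw_it⟩
    intro hvw
    -- v = w would give a cycle through u
    have hcyc : parent^[m + j] u = u := by
      rw [Function.iterate_add_apply, hj, hvw, hm]
    have hmj : m + j ≠ 0 := by omega
    have hu : u = root := cycle_root root parent hroot hreach hmj hcyc
    have : v = root := by rw [← hj, hu, Function.iterate_fixed hroot]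
    exact hvu (this.trans hu.symm)
  by_cases hasub : a ∈ subtreeSet parent u
  · -- a is inside the subtree: use hsub
    have : a ∈ subtreeSet parent u ∩ R' := by
      rw [← hsub]; exact ⟨hasub, haR⟩
    exact ⟨a, ⟨haw, this.2⟩, haZ⟩
  · -- a is a strict ancestor of u
    obtain ⟨hanew, n, hn⟩ := haw
    have hmn : m < n := by
      by_contra hle
      push_neg at hle
      apply hasub
      refine ⟨m - n, ?_⟩
      have : m = (m - n) + n := by omega
      rw [this, Function.iterate_add_apply, hn] at hm
      exact hm
    have hau_it : parent^[n - m] u = a := by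
      have : n = (n - m) + m := by omega
      rw [this, Function.iterate_add_apply, hm] at hn
      exact hn
    have hanu : a ≠ u := by
      intro h; exact hasub ⟨0, h⟩
    by_cases hav : a = v
    · exact ⟨v, ⟨hvw, hvR'⟩, hav ▸ haZ⟩
    · set k := n - m with hk
      rcases lt_trichotomy k j with hkj | hkj | hkj
      · -- a is strictly between u and v : contradiction with hpR
        exfalso
        have hva : v ∈ ancSet parent a := by
          refine ⟨fun h => hav h.symm, j - k, ?_⟩
          have : j = (j - k) + k := by omega
          rw [this, Function.iterate_add_apply, hau_it] at hj
          exact hj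
        have : a ∈ pathSet parent u v ∩ R := ⟨⟨⟨hanu, k, hau_it⟩, hva⟩, haR⟩
        rw [hpR] at this
        exact this
      · exact absurd (by rw [← hau_it, ← hj, hkj]) hav
      · -- a is a strict ancestor of v : monotonicity of vars
        have hav' : a ∈ ancSet parent v := by
          refine ⟨hav, k - j, ?_⟩
          have : k = (k - j) + j := by omega
          rw [this, Function.iterate_add_apply, hj] at hau_it
          exact hau_it
        exact ⟨v, ⟨hvw, hvR'⟩, (hvars v a hav').trans haZ⟩

end Aux

/-- if `v ∈ anc(u)`, `v ∈ R ∩ R'`, `subtree(u) ∩ R = subtree(u) ∩ R'`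
and `path(u,v) ∩ R = path(u,v) ∩ R' = ∅`, then `pB_u(R) = pB_u(R')`. -/
theorem partial_benefit_local {V α Q : Type*} [Fintype V] [DecidableEq V] [Fintype Q]
    (root : V) (parent : V → V)
    (hroot : parent root = root)
    (hreach : ∀ u, ∃ n : ℕ, parent^[n] u = root)
    (vars : V → Set α)
    (hvars : ∀ u v : V, v ∈ ancSet parent u → vars u ⊆ vars v)
    (Z : Q → Set α) (Pr : Q → ℝ)
    (hPr0 : ∀ q, 0 ≤ Pr q) (hPr1 : ∑ q : Q, Pr q = 1)
    (c : V → ℝ) (hc : ∀ x, 0 ≤ c x)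
    (u v : V) (hanc : v ∈ ancSet parent u)
    (R R' : Finset V) (hvR : v ∈ R) (hvR' : v ∈ R')
    (hsub : subtreeSet parent u ∩ (↑R : Set V) = subtreeSet parent u ∩ (↑R' : Set V))
    (hpR : pathSet parent u v ∩ (↑R : Set V) = ∅)
    (hpR' : pathSet parent u v ∩ (↑R' : Set V) = ∅) :
    pB parent vars Z Pr c u R = pB parent vars Z Pr c u R' := by
  have hfilter : R.filter (fun w => w ∈ subtreeSet parent u)
      = R'.filter (fun w => w ∈ subtreeSet parent u) := by
    ext x
    have hx := Set.ext_iff.mp hsub x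
    simp only [Set.mem_inter_iff, Finset.mem_coe] at hx
    simp only [Finset.mem_filter]
    tauto
  unfold pB
  rw [hfilter]
  apply Finset.sum_congr rfl
  intro w hw
  rw [Finset.mem_filter] at hw
  congr 1
  unfold eInd
  apply Finset.sum_congr rfl
  intro q _
  congr 1
  unfold useful
  have hiff : (vars w ⊆ Z q ∧ ∀ a ∈ ancSet parent w ∩ (↑R : Set V), ¬ vars a ⊆ Z q)
      ↔ (vars w ⊆ Z q ∧ ∀ a ∈ ancSet parent w ∩ (↑R' : Set V), ¬ vars a ⊆ Z q) := by
    apply and_congr_right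
    intro _
    constructor
    · intro hall a ha haZ
      obtain ⟨b, hb, hbZ⟩ := exists_mono root parent hroot hreach vars hvars u v hanc
        (↑R') (↑R) hvR hsub.symm hpR' w hw.2 (Z q) ⟨a, ha, haZ⟩
      exact hall b hb hbZ
    · intro hall a ha haZ
      obtain ⟨b, hb, hbZ⟩ := exists_mono root parent hroot hreach vars hvars u v hanc
        (↑R) (↑R') hvR' hsub hpR w hw.2 (Z q) ⟨a, ha, haZ⟩
      exact hall b hb hbZ
  by_cases h1 : vars w ⊆ Z q ∧ ∀ a ∈ ancSet parent w ∩ (↑R : Set V), ¬ vars a ⊆ Z q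
  · rw [if_pos h1, if_pos (hiff.mp h1)]
  · rw [if_neg h1, if_neg (fun h2 => h1 (hiff.mpr h2))]
end

section
/- Let k be a positive integer and let R* ⊆ V be a set maximizing B(R) over all R ⊆ V with |R| ≤ k. Let u ∈ V, let R*_u = subtree(u) ∩ R* and κ*_u = |R*_u|. If anc(u) ∩ R* ≠ ∅, let v be the lowest ancestor of u in R* (v ∈ anc(u) ∩ R* with path(u,v) ∩ R* = ∅); then R*_u maximizes pB_u(R_u ∪ {v}) over all R_u ⊆ subtree(u) with |R_u| = κ*_u. If anc(u) ∩ R* = ∅, then R*_u maximizes pB_u(R_u) over all R_u ⊆ subtree(u) with |R_u| = κ*_u. -/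
open scoped Classical

section Helpers
variable {V : Type*} {parent : V → V} {root : V}

lemma subtree_trans' {x y u : V} (hx : x ∈ subtreeSet parent y)
    (hy : y ∈ subtreeSet parent u) : x ∈ subtreeSet parent u := by
  obtain ⟨n, hn⟩ := hx; obtain ⟨m, hm⟩ := hy
  exact ⟨m + n, by rw [Function.iterate_add_apply, hn, hm]⟩

lemma no_cycle' (hroot : parent root = root)
    (hreach : ∀ u, ∃ n : ℕ, parent^[n] u = root)
    {u v : V} (hne : v ≠ u) (h1 : ∃ n : ℕ, parent^[n] u = v)
    (h2 : ∃ m : ℕ, parent^[m] v = u) : False := by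
  obtain ⟨n, hn⟩ := h1; obtain ⟨m, hm⟩ := h2
  have hn0 : n ≠ 0 := by rintro rfl; exact hne hn.symm
  have hcyc : parent^[m + n] u = u := by
    rw [Function.iterate_add_apply, hn, hm]
  have hmul : ∀ j : ℕ, parent^[j * (m + n)] u = u := by
    intro j; induction j with
    | zero => simp
    | succ j ih => rw [Nat.succ_mul, Function.iterate_add_apply, hcyc, ih]
  obtain ⟨N, hN⟩ := hreach u
  have hge : N ≤ (N + 1) * (m + n) := by
    calc N ≤ N + 1 := Nat.le_succ N
    _ = (N + 1) * 1 := (mul_one _).symm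
    _ ≤ (N + 1) * (m + n) := Nat.mul_le_mul_left _ (by omega)
  have hroot_fix : ∀ j : ℕ, parent^[j] root = root := fun j => Function.iterate_fixed hroot j
  have : u = root := by
    have := hmul (N + 1)
    rw [show (N + 1) * (m + n) = ((N + 1) * (m + n) - N) + N by omega,
      Function.iterate_add_apply, hN, hroot_fix] at this
    exact this.symm
  subst this
  exact hne (by rw [← hn, hroot_fix])

/-- an ancestor of `u` is not in the subtree of `u`. -/
lemma anc_not_subtree (hroot : parent root = root)
    (hreach : ∀ u, ∃ n : ℕ, parent^[n] u = root)
    {u v : V} (hv : v ∈ ancSet parent u) : v ∉ subtreeSet parent u := by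
  rintro ⟨m, hm⟩
  exact no_cycle' hroot hreach hv.1 hv.2 ⟨m, hm⟩

/-- an ancestor of a subtree node is either in the subtree or an ancestor of the root. -/
lemma anc_mem_cases {u w x : V} (hw : w ∈ subtreeSet parent u)
    (hx : x ∈ ancSet parent w) :
    x ∈ subtreeSet parent u ∨ x ∈ ancSet parent u := by
  obtain ⟨n, hn⟩ := hw
  obtain ⟨hne, m, hm⟩ := hx
  rcases le_or_gt m n with h | h
  · left
    exact ⟨n - m, by rw [← hm, ← Function.iterate_add_apply, Nat.sub_add_cancel h, hn]⟩
  · by_cases hxu : x = u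
    · left; exact hxu ▸ ⟨0, rfl⟩
    · right
      exact ⟨hxu, m - n, by rw [← hm, ← hn, ← Function.iterate_add_apply, Nat.sub_add_cancel h.le]⟩

/-- ancestors of `u` are comparable. -/
lemma anc_comparable {u x v : V} (hx : x ∈ ancSet parent u) (hv : v ∈ ancSet parent u) :
    x = v ∨ x ∈ ancSet parent v ∨ v ∈ ancSet parent x := by
  obtain ⟨hxne, b, hb⟩ := hx
  obtain ⟨hvne, a, ha⟩ := hv
  rcases le_or_gt a b with h | h
  · by_cases hxv : x = v
    · exact Or.inl hxv
    · refine Or.inr (Or.inl ⟨hxv, b - a, ?_⟩)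
      rw [← ha, ← Function.iterate_add_apply, Nat.sub_add_cancel h, hb]
  · by_cases hxv : x = v
    · exact Or.inl hxv
    · refine Or.inr (Or.inr ⟨fun h' => hxv h'.symm, a - b, ?_⟩)
      rw [← hb, ← Function.iterate_add_apply, Nat.sub_add_cancel h.le, ha]

/-- an ancestor of `u` is an ancestor of any subtree node of `u`. -/
lemma anc_of_subtree (hroot : parent root = root)
    (hreach : ∀ u, ∃ n : ℕ, parent^[n] u = root)
    {u v w : V} (hv : v ∈ ancSet parent u) (hw : w ∈ subtreeSet parent u) :
    v ∈ ancSet parent w := by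
  obtain ⟨n, hn⟩ := hw
  obtain ⟨hne, m, hm⟩ := hv
  refine ⟨fun h => anc_not_subtree hroot hreach ⟨hne, m, hm⟩ (h ▸ ⟨n, hn⟩), m + n, ?_⟩
  rw [Function.iterate_add_apply, hn, hm]

lemma not_subtree_anc_disjoint {u w x : V} (hw : w ∉ subtreeSet parent u)
    (hx : x ∈ ancSet parent w) : x ∉ subtreeSet parent u := by
  intro hxs
  obtain ⟨_, m, hm⟩ := hx
  exact hw (subtree_trans' ⟨m, hm⟩ hxs)

end Helpers

section CongrLemmas
variable {V α : Type*}

lemma useful_congr' (parent : V → V) (vars : V → Set α) (Zq : Set α) (w : V)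
    (R1 R2 : Set V)
    (h : (∃ x ∈ ancSet parent w ∩ R1, vars x ⊆ Zq) ↔
         (∃ x ∈ ancSet parent w ∩ R2, vars x ⊆ Zq)) :
    useful parent vars Zq w R1 = useful parent vars Zq w R2 := by
  unfold useful
  have hiff : (vars w ⊆ Zq ∧ ∀ v ∈ ancSet parent w ∩ R1, ¬ vars v ⊆ Zq) ↔
      (vars w ⊆ Zq ∧ ∀ v ∈ ancSet parent w ∩ R2, ¬ vars v ⊆ Zq) := by
    constructor
    · rintro ⟨h1, h2⟩
      refine ⟨h1, fun x hx hvx => ?_⟩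
      obtain ⟨y, hy, hvy⟩ := h.mpr ⟨x, hx, hvx⟩
      exact h2 y hy hvy
    · rintro ⟨h1, h2⟩
      refine ⟨h1, fun x hx hvx => ?_⟩
      obtain ⟨y, hy, hvy⟩ := h.mp ⟨x, hx, hvx⟩
      exact h2 y hy hvy
  exact if_congr hiff rfl rfl

lemma eInd_congr' {Q : Type*} [Fintype Q] (parent : V → V) (vars : V → Set α)
    (Z : Q → Set α) (Pr : Q → ℝ) (w : V) (R1 R2 : Set V)
    (h : ∀ Zq : Set α, useful parent vars Zq w R1 = useful parent vars Zq w R2) :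
    eInd parent vars Z Pr w R1 = eInd parent vars Z Pr w R2 := by
  unfold eInd
  exact Finset.sum_congr rfl fun q _ => by rw [h (Z q)]

/-- Key equivalence with a lowest ancestor `v`. -/
lemma key_iff {root : V} {parent : V → V}
    (hroot : parent root = root) (hreach : ∀ u, ∃ n : ℕ, parent^[n] u = root)
    (vars : V → Set α) (hvars : ∀ u v : V, v ∈ ancSet parent u → vars u ⊆ vars v)
    {u v : V} (hv : v ∈ ancSet parent u)
    (R Ru : Finset V)
    (hRsub : ∀ x ∈ R, x ∈ subtreeSet parent u → x ∈ Ru)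
    (hRuR : ∀ x ∈ Ru, x ∈ R)
    (hRuSub : ∀ x ∈ Ru, x ∈ subtreeSet parent u)
    (hvR : v ∈ R)
    (hpath : ∀ x ∈ R, x ∉ pathSet parent u v)
    {w : V} (hw : w ∈ subtreeSet parent u) (Zq : Set α) :
    (∃ x ∈ ancSet parent w ∩ (↑R : Set V), vars x ⊆ Zq) ↔
    (∃ x ∈ ancSet parent w ∩ (insert v (↑Ru : Set V)), vars x ⊆ Zq) := by
  classical
  constructor
  · rintro ⟨x, ⟨hxa, hxR⟩, hxv⟩
    rcases anc_mem_cases hw hxa with hxs | hxu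
    · exact ⟨x, ⟨hxa, by simp [hRsub x hxR hxs]⟩, hxv⟩
    · have hvw : v ∈ ancSet parent w := anc_of_subtree hroot hreach hv hw
      by_cases hxveq : x = v
      · exact ⟨v, ⟨hvw, by simp⟩, hxveq ▸ hxv⟩
      · rcases anc_comparable hxu hv with h | h | h
        · exact absurd h hxveq
        · -- x strict ancestor of v: vars v ⊆ vars x ⊆ Zq
          exact ⟨v, ⟨hvw, by simp⟩, (hvars v x h).trans hxv⟩
        · -- v strict ancestor of x: x on the path, contradiction
          exact absurd ⟨hxu, h⟩ (hpath x hxR)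
  · rintro ⟨x, ⟨hxa, hxR⟩, hxv⟩
    simp only [Set.mem_insert_iff, Finset.mem_coe] at hxR
    rcases hxR with rfl | hxRu
    · exact ⟨x, ⟨hxa, hvR⟩, hxv⟩
    · exact ⟨x, ⟨hxa, hRuR x hxRu⟩, hxv⟩

/-- Key equivalence when no ancestor is materialized. -/
lemma key_iff₂ {parent : V → V}
    (vars : V → Set α)
    {u : V}
    (R Ru : Finset V)
    (hRsub : ∀ x ∈ R, x ∈ subtreeSet parent u → x ∈ Ru)
    (hRuR : ∀ x ∈ Ru, x ∈ R)
    (hanc : ∀ x ∈ R, x ∉ ancSet parent u)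
    {w : V} (hw : w ∈ subtreeSet parent u) (Zq : Set α) :
    (∃ x ∈ ancSet parent w ∩ (↑R : Set V), vars x ⊆ Zq) ↔
    (∃ x ∈ ancSet parent w ∩ (↑Ru : Set V), vars x ⊆ Zq) := by
  constructor
  · rintro ⟨x, ⟨hxa, hxR⟩, hxv⟩
    rcases anc_mem_cases hw hxa with hxs | hxu
    · exact ⟨x, ⟨hxa, hRsub x hxR hxs⟩, hxv⟩
    · exact absurd hxu (hanc x hxR)
  · rintro ⟨x, ⟨hxa, hxR⟩, hxv⟩
    exact ⟨x, ⟨hxa, hRuR x hxR⟩, hxv⟩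

end CongrLemmas

section Exchange
variable {V α Q : Type*} [Fintype V] [DecidableEq V] [Fintype Q]

lemma eInd_out_eq (parent : V → V) (vars : V → Set α) (Z : Q → Set α) (Pr : Q → ℝ)
    (u : V) (Rstar Ru : Finset V)
    (hRusub : ∀ x ∈ Ru, x ∈ subtreeSet parent u)
    {w : V} (hw : w ∉ subtreeSet parent u) :
    eInd parent vars Z Pr w ↑(Rstar.filter (fun w => w ∉ subtreeSet parent u) ∪ Ru)
      = eInd parent vars Z Pr w ↑Rstar := by
  refine eInd_congr' parent vars Z Pr w _ _ fun Zq => ?_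
  refine useful_congr' parent vars Zq w _ _ ?_
  constructor
  · rintro ⟨x, ⟨hxa, hxR⟩, hxv⟩
    have hxns := not_subtree_anc_disjoint hw hxa
    simp only [Finset.coe_union, Set.mem_union, Finset.mem_coe, Finset.mem_filter] at hxR
    rcases hxR with ⟨h1, _⟩ | h
    · exact ⟨x, ⟨hxa, h1⟩, hxv⟩
    · exact absurd (hRusub x h) hxns
  · rintro ⟨x, ⟨hxa, hxR⟩, hxv⟩
    have hxns := not_subtree_anc_disjoint hw hxa
    refine ⟨x, ⟨hxa, ?_⟩, hxv⟩
    exact Finset.mem_coe.mpr (Finset.mem_union_left _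
      (Finset.mem_filter.mpr ⟨Finset.mem_coe.mp hxR, hxns⟩))

lemma exchange_le (parent : V → V) (vars : V → Set α) (Z : Q → Set α) (Pr : Q → ℝ)
    (c : V → ℝ) (k : ℕ) (Rstar : Finset V) (hcard : Rstar.card ≤ k)
    (hopt : ∀ R : Finset V, R.card ≤ k →
      benefit parent vars Z Pr c R ≤ benefit parent vars Z Pr c Rstar)
    (u : V) (Ru : Finset V) (hRusub : ∀ x ∈ Ru, x ∈ subtreeSet parent u)
    (hRucard : Ru.card = (Rstar.filter (fun w => w ∈ subtreeSet parent u)).card) :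
    pB parent vars Z Pr c u ((Rstar.filter (fun w => w ∉ subtreeSet parent u)) ∪ Ru)
      ≤ pB parent vars Z Pr c u Rstar := by
  set R' := (Rstar.filter (fun w => w ∉ subtreeSet parent u)) ∪ Ru with hR'
  have hsplit : ∀ R : Finset V, benefit parent vars Z Pr c R
      = pB parent vars Z Pr c u R
        + ∑ w ∈ R.filter (fun w => w ∉ subtreeSet parent u),
            eInd parent vars Z Pr w ↑R * util parent c w := by
    intro R
    rw [benefit, pB,
      ← Finset.sum_filter_add_sum_filter_not R (fun w => w ∈ subtreeSet parent u)]
  have hfilout : R'.filter (fun w => w ∉ subtreeSet parent u)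
      = Rstar.filter (fun w => w ∉ subtreeSet parent u) := by
    ext x
    simp only [hR', Finset.mem_filter, Finset.mem_union]
    constructor
    · rintro ⟨⟨h1, _⟩ | h1, h2⟩
      · exact ⟨h1, h2⟩
      · exact absurd (hRusub x h1) h2
    · rintro ⟨h1, h2⟩
      exact ⟨Or.inl ⟨h1, h2⟩, h2⟩
  have hout : ∑ w ∈ R'.filter (fun w => w ∉ subtreeSet parent u),
        eInd parent vars Z Pr w ↑R' * util parent c w
      = ∑ w ∈ Rstar.filter (fun w => w ∉ subtreeSet parent u),
        eInd parent vars Z Pr w ↑Rstar * util parent c w := by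
    rw [hfilout]
    refine Finset.sum_congr rfl fun w hw => ?_
    rw [eInd_out_eq parent vars Z Pr u Rstar Ru hRusub (Finset.mem_filter.mp hw).2]
  have hcard' : R'.card ≤ k := by
    have h1 : R'.card ≤ (Rstar.filter (fun w => w ∉ subtreeSet parent u)).card + Ru.card :=
      Finset.card_union_le _ _
    have h2 : (Rstar.filter (fun w => w ∈ subtreeSet parent u)).card
        + (Rstar.filter (fun w => ¬ w ∈ subtreeSet parent u)).card = Rstar.card :=
      Finset.card_filter_add_card_filter_not (p := fun w => w ∈ subtreeSet parent u)
    omega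
  have hb := hopt R' hcard'
  rw [hsplit R', hsplit Rstar, hout] at hb
  linarith

lemma pB_reduce_v {root : V} {parent : V → V}
    (hroot : parent root = root) (hreach : ∀ u, ∃ n : ℕ, parent^[n] u = root)
    (vars : V → Set α) (hvars : ∀ u v : V, v ∈ ancSet parent u → vars u ⊆ vars v)
    (Z : Q → Set α) (Pr : Q → ℝ) (c : V → ℝ)
    {u v : V} (hv : v ∈ ancSet parent u)
    (R Ru : Finset V)
    (hRsub : ∀ x ∈ R, x ∈ subtreeSet parent u → x ∈ Ru)
    (hRuR : ∀ x ∈ Ru, x ∈ R)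
    (hRuSub : ∀ x ∈ Ru, x ∈ subtreeSet parent u)
    (hvR : v ∈ R)
    (hpath : ∀ x ∈ R, x ∉ pathSet parent u v) :
    pB parent vars Z Pr c u R = pB parent vars Z Pr c u (insert v Ru) := by
  have hfilR : R.filter (fun w => w ∈ subtreeSet parent u) = Ru := by
    ext x; simp only [Finset.mem_filter]
    exact ⟨fun ⟨h1, h2⟩ => hRsub x h1 h2, fun h => ⟨hRuR x h, hRuSub x h⟩⟩
  have hvns : v ∉ subtreeSet parent u := anc_not_subtree hroot hreach hv
  have hfilI : (insert v Ru).filter (fun w => w ∈ subtreeSet parent u) = Ru := by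
    ext x; simp only [Finset.mem_filter, Finset.mem_insert]
    constructor
    · rintro ⟨rfl | h, h2⟩
      · exact absurd h2 hvns
      · exact h
    · exact fun h => ⟨Or.inr h, hRuSub x h⟩
  rw [pB, pB, hfilR, hfilI]
  refine Finset.sum_congr rfl fun w hw => ?_
  rw [Finset.coe_insert,
    eInd_congr' parent vars Z Pr w _ _ (fun Zq => useful_congr' parent vars Zq w _ _
    (key_iff hroot hreach vars hvars hv R Ru hRsub hRuR hRuSub hvR hpath (hRuSub w hw) Zq))]

lemma pB_reduce_noanc {parent : V → V}
    (vars : V → Set α) (Z : Q → Set α) (Pr : Q → ℝ) (c : V → ℝ)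
    {u : V} (R Ru : Finset V)
    (hRsub : ∀ x ∈ R, x ∈ subtreeSet parent u → x ∈ Ru)
    (hRuR : ∀ x ∈ Ru, x ∈ R)
    (hRuSub : ∀ x ∈ Ru, x ∈ subtreeSet parent u)
    (hanc : ∀ x ∈ R, x ∉ ancSet parent u) :
    pB parent vars Z Pr c u R = pB parent vars Z Pr c u Ru := by
  have hfilR : R.filter (fun w => w ∈ subtreeSet parent u) = Ru := by
    ext x; simp only [Finset.mem_filter]
    exact ⟨fun ⟨h1, h2⟩ => hRsub x h1 h2, fun h => ⟨hRuR x h, hRuSub x h⟩⟩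
  have hfilRu : Ru.filter (fun w => w ∈ subtreeSet parent u) = Ru :=
    Finset.filter_true_of_mem hRuSub
  rw [pB, pB, hfilR, hfilRu]
  refine Finset.sum_congr rfl fun w hw => ?_
  rw [eInd_congr' parent vars Z Pr w _ _ (fun Zq => useful_congr' parent vars Zq w _ _
    (key_iff₂ vars R Ru hRsub hRuR hanc (hRuSub w hw) Zq))]

end Exchange



/-- Optimal substructure: if `R*` maximizes the benefit over all
sets of at most `k` nodes, then for every node `u`, the restriction
`R*_u = subtree(u) ∩ R*` maximizes the partial benefit `pB_u(R_u ∪ {v})`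
(where `v` is the lowest ancestor of `u` in `R*`, if any) over all
`R_u ⊆ subtree(u)` of cardinality `κ*_u = |R*_u|`. -/
theorem optimal_substructure {V α Q : Type*} [Fintype V] [DecidableEq V] [Fintype Q]
    (root : V) (parent : V → V)
    (hroot : parent root = root)
    (hreach : ∀ u, ∃ n : ℕ, parent^[n] u = root)
    (vars : V → Set α)
    (hvars : ∀ u v : V, v ∈ ancSet parent u → vars u ⊆ vars v)
    (Z : Q → Set α) (Pr : Q → ℝ)
    (hPr0 : ∀ q, 0 ≤ Pr q) (hPr1 : ∑ q : Q, Pr q = 1)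
    (c : V → ℝ) (hc : ∀ x, 0 ≤ c x)
    (k : ℕ) (hk : 0 < k)
    (Rstar : Finset V) (hcard : Rstar.card ≤ k)
    (hopt : ∀ R : Finset V, R.card ≤ k →
      benefit parent vars Z Pr c R ≤ benefit parent vars Z Pr c Rstar)
    (u : V) :
    (∀ v ∈ Rstar, v ∈ ancSet parent u → pathSet parent u v ∩ (↑Rstar : Set V) = ∅ →
      ∀ Ru : Finset V, (↑Ru : Set V) ⊆ subtreeSet parent u →
        Ru.card = (Rstar.filter (fun w => w ∈ subtreeSet parent u)).card →
        pB parent vars Z Pr c u (insert v Ru) ≤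
          pB parent vars Z Pr c u
            (insert v (Rstar.filter (fun w => w ∈ subtreeSet parent u)))) ∧
    (ancSet parent u ∩ (↑Rstar : Set V) = ∅ →
      ∀ Ru : Finset V, (↑Ru : Set V) ⊆ subtreeSet parent u →
        Ru.card = (Rstar.filter (fun w => w ∈ subtreeSet parent u)).card →
        pB parent vars Z Pr c u Ru ≤
          pB parent vars Z Pr c u
            (Rstar.filter (fun w => w ∈ subtreeSet parent u))) := by
  constructor
  · intro v hvR hvanc hpathset Ru hRusub hRucard
    have hpathstar : ∀ x ∈ Rstar, x ∉ pathSet parent u v := fun x hx hp =>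
      Set.eq_empty_iff_forall_notMem.mp hpathset x ⟨hp, hx⟩
    have hRusub' : ∀ x ∈ Ru, x ∈ subtreeSet parent u := fun x hx => hRusub hx
    have hvns : v ∉ subtreeSet parent u := anc_not_subtree hroot hreach hvanc
    have hL : pB parent vars Z Pr c u
        ((Rstar.filter (fun w => w ∉ subtreeSet parent u)) ∪ Ru)
        = pB parent vars Z Pr c u (insert v Ru) := by
      refine pB_reduce_v hroot hreach vars hvars Z Pr c hvanc _ _ ?_ ?_ ?_ ?_ ?_
      · intro x hx hxs
        rcases Finset.mem_union.mp hx with h | h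
        · exact absurd hxs (Finset.mem_filter.mp h).2
        · exact h
      · exact fun x hx => Finset.mem_union_right _ hx
      · exact hRusub'
      · exact Finset.mem_union_left _ (Finset.mem_filter.mpr ⟨hvR, hvns⟩)
      · intro x hx hp
        rcases Finset.mem_union.mp hx with h | h
        · exact hpathstar x (Finset.mem_filter.mp h).1 hp
        · exact anc_not_subtree hroot hreach hp.1 (hRusub' x h)
    have hR : pB parent vars Z Pr c u Rstar
        = pB parent vars Z Pr c u
            (insert v (Rstar.filter (fun w => w ∈ subtreeSet parent u))) := by
      refine pB_reduce_v hroot hreach vars hvars Z Pr c hvanc _ _ ?_ ?_ ?_ hvR hpathstar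
      · exact fun x hx hxs => Finset.mem_filter.mpr ⟨hx, hxs⟩
      · exact fun x hx => (Finset.mem_filter.mp hx).1
      · exact fun x hx => (Finset.mem_filter.mp hx).2
    have hmid := exchange_le parent vars Z Pr c k Rstar hcard hopt u Ru hRusub' hRucard
    rw [hL, hR] at hmid
    exact hmid
  · intro hancset Ru hRusub hRucard
    have hancstar : ∀ x ∈ Rstar, x ∉ ancSet parent u := fun x hx ha =>
      Set.eq_empty_iff_forall_notMem.mp hancset x ⟨ha, hx⟩
    have hRusub' : ∀ x ∈ Ru, x ∈ subtreeSet parent u := fun x hx => hRusub hx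
    have hL : pB parent vars Z Pr c u
        ((Rstar.filter (fun w => w ∉ subtreeSet parent u)) ∪ Ru)
        = pB parent vars Z Pr c u Ru := by
      refine pB_reduce_noanc vars Z Pr c _ _ ?_ ?_ hRusub' ?_
      · intro x hx hxs
        rcases Finset.mem_union.mp hx with h | h
        · exact absurd hxs (Finset.mem_filter.mp h).2
        · exact h
      · exact fun x hx => Finset.mem_union_right _ hx
      · intro x hx ha
        rcases Finset.mem_union.mp hx with h | h
        · exact hancstar x (Finset.mem_filter.mp h).1 ha
        · exact anc_not_subtree hroot hreach ha (hRusub' x h)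
    have hR : pB parent vars Z Pr c u Rstar
        = pB parent vars Z Pr c u
            (Rstar.filter (fun w => w ∈ subtreeSet parent u)) := by
      refine pB_reduce_noanc vars Z Pr c _ _ ?_ ?_ ?_ hancstar
      · exact fun x hx hxs => Finset.mem_filter.mpr ⟨hx, hxs⟩
      · exact fun x hx => (Finset.mem_filter.mp hx).1
      · exact fun x hx => (Finset.mem_filter.mp hx).2
    have hmid := exchange_le parent vars Z Pr c k Rstar hcard hopt u Ru hRusub' hRucard
    rw [hL, hR] at hmid
    exact hmid
end

section
/- The benefit function B : 2^V → ℝ≥0 is monotone: for every R ⊆ V and every u ∈ V \ R, B(R ∪ {u}) ≥ B(R). -/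
open scoped Classical

section MyAux

variable {V : Type*}

lemma myIterRoot (parent : V → V) (root : V) (hroot : parent root = root) (n : ℕ) :
    parent^[n] root = root := Function.iterate_fixed hroot n

lemma myNoCycle (parent : V → V) (root : V) (hroot : parent root = root)
    (hreach : ∀ u, ∃ n : ℕ, parent^[n] u = root)
    (w : V) (n : ℕ) (hn : 1 ≤ n) (hcyc : parent^[n] w = w) : w = root := by
  obtain ⟨k, hk⟩ := hreach w
  have hmult : ∀ j : ℕ, parent^[n * j] w = w := by
    intro j
    induction j with
    | zero => simp
    | succ j ih => rw [Nat.mul_succ, Function.iterate_add_apply, hcyc, ih]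
  have hle : k ≤ n * (k + 1) := by nlinarith
  have h2 : parent^[(n * (k + 1) - k) + k] w = parent^[n * (k + 1) - k] (parent^[k] w) :=
    Function.iterate_add_apply parent _ k w
  rw [Nat.sub_add_cancel hle, hk, myIterRoot parent root hroot, hmult (k + 1)] at h2
  exact h2

lemma myAncTrans (parent : V → V) (root : V) (hroot : parent root = root)
    (hreach : ∀ u, ∃ n : ℕ, parent^[n] u = root)
    {u v w : V} (hu : u ∈ ancSet parent w) (hv : v ∈ ancSet parent u) :
    v ∈ ancSet parent w := by
  obtain ⟨hune, m, hm⟩ := hu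
  obtain ⟨hvne, n, hn⟩ := hv
  refine ⟨?_, n + m, by rw [Function.iterate_add_apply, hm, hn]⟩
  intro hvw
  subst hvw
  have hn1 : 1 ≤ n := by
    rcases Nat.eq_zero_or_pos n with h | h
    · exfalso; subst h; simp at hn; exact hvne hn.symm
    · exact h
  have hcyc : parent^[n + m] v = v := by
    rw [Function.iterate_add_apply, hm, hn]
  have hw : v = root := myNoCycle parent root hroot hreach v (n + m) (by omega) hcyc
  apply hvne
  rw [hw, myIterRoot parent root hroot] at hm
  rw [← hm, hw]

lemma mySubtreeTrans (parent : V → V) {x w u : V} (hx : x ∈ subtreeSet parent w)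
    (hw : w ∈ subtreeSet parent u) : x ∈ subtreeSet parent u := by
  obtain ⟨m, hm⟩ := hx; obtain ⟨k, hk⟩ := hw
  exact ⟨k + m, by rw [Function.iterate_add_apply, hm, hk]⟩

lemma myAncOrAnc (parent : V → V) {x w₁ w₂ : V} (h1 : x ∈ subtreeSet parent w₁)
    (h2 : x ∈ subtreeSet parent w₂) (hne : w₁ ≠ w₂) :
    w₁ ∈ ancSet parent w₂ ∨ w₂ ∈ ancSet parent w₁ := by
  obtain ⟨m, hm⟩ := h1; obtain ⟨n, hn⟩ := h2
  rcases le_total m n with h | h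
  · right
    refine ⟨hne.symm, n - m, ?_⟩
    rw [← hm, ← Function.iterate_add_apply, Nat.sub_add_cancel h, hn]
  · left
    refine ⟨hne, m - n, ?_⟩
    rw [← hn, ← Function.iterate_add_apply, Nat.sub_add_cancel h, hm]

open scoped Classical in
lemma myKey {V α : Type*} [Fintype V] [DecidableEq V]
    (root : V) (parent : V → V) (hroot : parent root = root)
    (hreach : ∀ u, ∃ n : ℕ, parent^[n] u = root)
    (vars : V → Set α) (Zq : Set α)
    (c : V → ℝ) (hc : ∀ x, 0 ≤ c x)
    (R : Finset V) (u : V) (hu : u ∉ R) :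
    ∑ w ∈ R, useful parent vars Zq w ↑R * util parent c w ≤
      ∑ w ∈ insert u R, useful parent vars Zq w ↑(insert u R) * util parent c w := by
  have hutil : ∀ w, 0 ≤ util parent c w := fun w => Finset.sum_nonneg fun x _ => hc x
  have husenn : ∀ w (S : Set V), 0 ≤ useful parent vars Zq w S := by
    intro w S; unfold useful; split <;> norm_num
  rw [Finset.sum_insert hu]
  by_cases hZu : vars u ⊆ Zq
  · -- interesting case
    set P : V → Prop := fun w => u ∈ ancSet parent w ∧
        (∀ v ∈ ancSet parent w ∩ (↑R : Set V), ¬ vars v ⊆ Zq) ∧ vars w ⊆ Zq with hP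
    -- off the killed set, useful is unchanged
    have hsame : ∀ w ∈ R.filter (fun w => ¬ P w),
        useful parent vars Zq w ↑(insert u R) = useful parent vars Zq w ↑R := by
      intro w hw
      rw [Finset.mem_filter] at hw
      obtain ⟨hwR, hwnP⟩ := hw
      have hiff : (vars w ⊆ Zq ∧ ∀ v ∈ ancSet parent w ∩ (↑(insert u R) : Set V),
            ¬ vars v ⊆ Zq) ↔
          (vars w ⊆ Zq ∧ ∀ v ∈ ancSet parent w ∩ (↑R : Set V), ¬ vars v ⊆ Zq) := by
        constructor
        · rintro ⟨h1, h2⟩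
          exact ⟨h1, fun v hv => h2 v ⟨hv.1, by simp [hv.2]⟩⟩
        · rintro ⟨h1, h2⟩
          refine ⟨h1, fun v hv => ?_⟩
          rcases hv with ⟨hva, hvm⟩
          rw [Finset.coe_insert, Set.mem_insert_iff] at hvm
          rcases hvm with rfl | hvR
          · -- v = u; then P w would hold, contradiction
            intro _
            exact hwnP ⟨hva, fun v' hv' => h2 v' hv', h1⟩
          · exact h2 v ⟨hva, hvR⟩
      unfold useful
      by_cases h : vars w ⊆ Zq ∧ ∀ v ∈ ancSet parent w ∩ (↑R : Set V), ¬ vars v ⊆ Zq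
      · rw [if_pos h, if_pos (hiff.mpr h)]
      · rw [if_neg h, if_neg (fun hh => h (hiff.mp hh))]
    -- on the killed set, old useful = 1, new useful = 0
    have hold1 : ∀ w ∈ R.filter P, useful parent vars Zq w ↑R = 1 := by
      intro w hw
      rw [Finset.mem_filter] at hw
      unfold useful
      rw [if_pos ⟨hw.2.2.2, hw.2.2.1⟩]
    have hnew0 : ∀ w ∈ R.filter P, useful parent vars Zq w ↑(insert u R) = 0 := by
      intro w hw
      rw [Finset.mem_filter] at hw
      unfold useful
      rw [if_neg]
      rintro ⟨-, h2⟩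
      exact h2 u ⟨hw.2.1, by simp⟩ hZu
    -- reduce to the core inequality
    have hsplit : ∀ f : V → ℝ, ∑ w ∈ R, f w
        = ∑ w ∈ R.filter P, f w + ∑ w ∈ R.filter (fun w => ¬ P w), f w :=
      fun f => (Finset.sum_filter_add_sum_filter_not R P f).symm
    rw [hsplit (fun w => useful parent vars Zq w ↑R * util parent c w),
        hsplit (fun w => useful parent vars Zq w ↑(insert u R) * util parent c w)]
    have e1 : ∑ w ∈ R.filter P, useful parent vars Zq w ↑R * util parent c w
        = ∑ w ∈ R.filter P, util parent c w :=
      Finset.sum_congr rfl fun w hw => by rw [hold1 w hw, one_mul]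
    have e2 : ∑ w ∈ R.filter P, useful parent vars Zq w ↑(insert u R) * util parent c w = 0 :=
      Finset.sum_eq_zero fun w hw => by rw [hnew0 w hw, zero_mul]
    have e3 : ∑ w ∈ R.filter (fun w => ¬ P w), useful parent vars Zq w ↑(insert u R) * util parent c w
        = ∑ w ∈ R.filter (fun w => ¬ P w), useful parent vars Zq w ↑R * util parent c w :=
      Finset.sum_congr rfl fun w hw => by rw [hsame w hw]
    rw [e1, e2, e3]
    have core : ∑ w ∈ R.filter P, util parent c w ≤
        useful parent vars Zq u ↑(insert u R) * util parent c u := by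
      rcases Finset.eq_empty_or_nonempty (R.filter P) with he | ⟨w0, hw0⟩
      · rw [he, Finset.sum_empty]
        exact mul_nonneg (husenn _ _) (hutil _)
      · rw [Finset.mem_filter] at hw0
        have huse1 : useful parent vars Zq u ↑(insert u R) = 1 := by
          unfold useful
          rw [if_pos]
          refine ⟨hZu, fun v hv => ?_⟩
          rcases hv with ⟨hva, hvm⟩
          have hvne : v ≠ u := hva.1
          rw [Finset.coe_insert, Set.mem_insert_iff] at hvm
          rcases hvm with rfl | hvR
          · exact absurd rfl hvne
          · exact hw0.2.2.1 v ⟨myAncTrans parent root hroot hreach hw0.2.1 hva, hvR⟩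
        rw [huse1, one_mul]
        -- sum of disjoint subtree utilities ≤ util u
        set T : V → Finset V := fun w =>
          Finset.univ.filter (fun x => x ∈ subtreeSet parent w) with hT
        have hdisj : (↑(R.filter P) : Set V).PairwiseDisjoint T := by
          intro w1 hw1 w2 hw2 hne
          simp only [Finset.coe_filter, Set.mem_setOf_eq] at hw1 hw2
          show Disjoint (T w1) (T w2)
          rw [Finset.disjoint_left]
          intro x hx1 hx2
          simp only [hT, Finset.mem_filter, Finset.mem_univ, true_and] at hx1 hx2
          rcases myAncOrAnc parent hx1 hx2 hne with h | h
          · exact hw2.2.2.1 w1 ⟨h, hw1.1⟩ hw1.2.2.2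
          · exact hw1.2.2.1 w2 ⟨h, hw2.1⟩ hw2.2.2.2
        have hsum : ∑ w ∈ R.filter P, util parent c w
            = ∑ x ∈ (R.filter P).biUnion T, c x := by
          rw [Finset.sum_biUnion hdisj]
          exact Finset.sum_congr rfl fun w _ => rfl
        rw [hsum]
        apply Finset.sum_le_sum_of_subset_of_nonneg
        · intro x hx
          rw [Finset.mem_biUnion] at hx
          obtain ⟨w, hwS, hxw⟩ := hx
          rw [Finset.mem_filter] at hwS
          simp only [hT, Finset.mem_filter, Finset.mem_univ, true_and] at hxw ⊢
          exact mySubtreeTrans parent hxw hwS.2.1.2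
        · intro x _ _; exact hc x
    linarith
  · -- vars u ⊄ Zq : nothing changes and the new term is nonnegative
    have heq : ∀ w ∈ R,
        useful parent vars Zq w ↑(insert u R) = useful parent vars Zq w ↑R := by
      intro w hw
      have hiff : (vars w ⊆ Zq ∧ ∀ v ∈ ancSet parent w ∩ (↑(insert u R) : Set V),
            ¬ vars v ⊆ Zq) ↔
          (vars w ⊆ Zq ∧ ∀ v ∈ ancSet parent w ∩ (↑R : Set V), ¬ vars v ⊆ Zq) := by
        constructor
        · rintro ⟨h1, h2⟩
          exact ⟨h1, fun v hv => h2 v ⟨hv.1, by simp [hv.2]⟩⟩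
        · rintro ⟨h1, h2⟩
          refine ⟨h1, fun v hv => ?_⟩
          rcases hv with ⟨hva, hvm⟩
          rw [Finset.coe_insert, Set.mem_insert_iff] at hvm
          rcases hvm with rfl | hvR
          · exact hZu
          · exact h2 v ⟨hva, hvR⟩
      unfold useful
      by_cases h : vars w ⊆ Zq ∧ ∀ v ∈ ancSet parent w ∩ (↑R : Set V), ¬ vars v ⊆ Zq
      · rw [if_pos h, if_pos (hiff.mpr h)]
      · rw [if_neg h, if_neg (fun hh => h (hiff.mp hh))]
    have : ∑ w ∈ R, useful parent vars Zq w ↑(insert u R) * util parent c w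
        = ∑ w ∈ R, useful parent vars Zq w ↑R * util parent c w :=
      Finset.sum_congr rfl fun w hw => by rw [heq w hw]
    rw [this]
    have : 0 ≤ useful parent vars Zq u ↑(insert u R) * util parent c u :=
      mul_nonneg (husenn _ _) (hutil _)
    linarith

end MyAux

/-- the benefit function is monotone: for every `R ⊆ V` and
`u ∈ V \ R`, `B(R ∪ {u}) ≥ B(R)`. -/
theorem benefit_monotone {V α Q : Type*} [Fintype V] [DecidableEq V] [Fintype Q]
    (root : V) (parent : V → V)
    (hroot : parent root = root)
    (hreach : ∀ u, ∃ n : ℕ, parent^[n] u = root)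
    (vars : V → Set α)
    (hvars : ∀ u v : V, v ∈ ancSet parent u → vars u ⊆ vars v)
    (Z : Q → Set α) (Pr : Q → ℝ)
    (hPr0 : ∀ q, 0 ≤ Pr q) (hPr1 : ∑ q : Q, Pr q = 1)
    (c : V → ℝ) (hc : ∀ x, 0 ≤ c x)
    (R : Finset V) (u : V) (hu : u ∉ R) :
    benefit parent vars Z Pr c R ≤ benefit parent vars Z Pr c (insert u R) := by
  unfold benefit eInd
  have hrw : ∀ (S : Finset V),
      ∑ w ∈ S, (∑ q : Q, Pr q * useful parent vars (Z q) w ↑S) * util parent c w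
        = ∑ q : Q, Pr q * ∑ w ∈ S, useful parent vars (Z q) w ↑S * util parent c w := by
    intro S
    calc ∑ w ∈ S, (∑ q : Q, Pr q * useful parent vars (Z q) w ↑S) * util parent c w
        = ∑ w ∈ S, ∑ q : Q, Pr q * (useful parent vars (Z q) w ↑S * util parent c w) := by
          refine Finset.sum_congr rfl fun w _ => ?_
          rw [Finset.sum_mul]
          exact Finset.sum_congr rfl fun q _ => mul_assoc _ _ _
      _ = ∑ q : Q, ∑ w ∈ S, Pr q * (useful parent vars (Z q) w ↑S * util parent c w) :=
          Finset.sum_comm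
      _ = ∑ q : Q, Pr q * ∑ w ∈ S, useful parent vars (Z q) w ↑S * util parent c w :=
          Finset.sum_congr rfl fun q _ => (Finset.mul_sum _ _ _).symm
  rw [hrw R, hrw (insert u R)]
  refine Finset.sum_le_sum fun q _ => ?_
  exact mul_le_mul_of_nonneg_left
    (myKey root parent hroot hreach vars (Z q) c hc R u hu) (hPr0 q)
end

section
/- For every Bayesian network N on a nonempty variable set X and every elimination order σ on X, the elimination graph of (N, σ) is a tree (i.e., its underlying undirected graph is connected and acyclic) if and only if N is weakly connected. -/
open scoped Classical

section ElimDefs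

variable {X : Type*}

/-- The scope of the leaf node `F_x`: `{x} ∪ parents(x)` in the network `E`. -/
noncomputable def leafScope [Fintype X] [DecidableEq X] (E : X → X → Prop) (x : X) : Finset X :=
  insert x (Finset.univ.filter (fun y => E y x))

/-- `i` is the first position (w.r.t. the elimination order `σ`) of a variable
belonging to `S`; a current node with scope `S` is consumed exactly at this step. -/
def minAt {n : ℕ} (σ : Fin n ≃ X) (S : Finset X) (i : Fin n) : Prop :=
  σ i ∈ S ∧ ∀ j : Fin n, σ j ∈ S → i ≤ j

/-- `IS` records the scopes of the internal nodes of the elimination graph of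
`(E, σ)`: `IS i` is the scope of the node `u_{σ i}` created at step `i`, namely
the union of the scopes of the current nodes containing `σ i` (the leaves `F_x`
first consumed at step `i`, and the internal nodes `u_{σ j}`, `j < i`, first
consumed at step `i`), with `σ i` removed. -/
def elimRec [Fintype X] [DecidableEq X] (E : X → X → Prop) {n : ℕ} (σ : Fin n ≃ X)
    (IS : Fin n → Finset X) : Prop :=
  ∀ i : Fin n, IS i =
    ((Finset.univ.filter (fun x : X => minAt σ (leafScope E x) i)).biUnion
        (leafScope E) ∪
     (Finset.univ.filter (fun j : Fin n => j < i ∧ minAt σ (IS j) i)).biUnion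
        IS).erase (σ i)

/-- The directed edges of the elimination graph: each node consumed at step `i`
points to the internal node `u_{σ i}` created at step `i`.  `Sum.inl x` is the
leaf `F_x` and `Sum.inr i` is the internal node `u_{σ i}`. -/
def elimEdge [Fintype X] [DecidableEq X] (E : X → X → Prop) {n : ℕ} (σ : Fin n ≃ X)
    (IS : Fin n → Finset X) : X ⊕ Fin n → X ⊕ Fin n → Prop :=
  fun a b =>
    match a, b with
    | Sum.inl x, Sum.inr i => minAt σ (leafScope E x) i
    | Sum.inr j, Sum.inr i => j < i ∧ minAt σ (IS j) i
    | _, _ => False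

/-- The underlying undirected graph of the elimination graph of `(E, σ)`. -/
def elimGraph [Fintype X] [DecidableEq X] (E : X → X → Prop) {n : ℕ} (σ : Fin n ≃ X)
    (IS : Fin n → Finset X) : SimpleGraph (X ⊕ Fin n) where
  Adj a b := a ≠ b ∧ (elimEdge E σ IS a b ∨ elimEdge E σ IS b a)
  symm := ⟨fun _a _b h => ⟨h.1.symm, h.2.symm⟩⟩
  loopless := ⟨fun _a h => h.1 rfl⟩

/-- The underlying undirected graph of the Bayesian network `E`. -/
def bnGraph (E : X → X → Prop) : SimpleGraph X where
  Adj a b := a ≠ b ∧ (E a b ∨ E b a)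
  symm := ⟨fun _a _b h => ⟨h.1.symm, h.2.symm⟩⟩
  loopless := ⟨fun _a h => h.1 rfl⟩

end ElimDefs

section ProofAux

open SimpleGraph

variable {X : Type*} [Fintype X] [DecidableEq X]
variable {E : X → X → Prop} {n : ℕ} {σ : Fin n ≃ X} {IS : Fin n → Finset X}

lemma minAt_unique {S : Finset X} {i j : Fin n}
    (hi : minAt σ S i) (hj : minAt σ S j) : i = j :=
  le_antisymm (hi.2 j hj.1) (hj.2 i hi.1)

lemma minAt_exists (σ : Fin n ≃ X) {S : Finset X} (hS : S.Nonempty) :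
    ∃ i, minAt σ S i := by
  obtain ⟨y, hy⟩ := hS
  have hne : (S.image σ.symm).Nonempty := ⟨σ.symm y, Finset.mem_image_of_mem _ hy⟩
  refine ⟨(S.image σ.symm).min' hne, ?_, ?_⟩
  · obtain ⟨z, hz, hz'⟩ := Finset.mem_image.mp ((S.image σ.symm).min'_mem hne)
    rw [← hz', Equiv.apply_symm_apply]; exact hz
  · intro j hj
    exact Finset.min'_le _ _ (by simpa using Finset.mem_image_of_mem σ.symm hj)

lemma mem_IS_iff (hIS : elimRec E σ IS) (i : Fin n) (y : X) :
    y ∈ IS i ↔ y ≠ σ i ∧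
      ((∃ x, minAt σ (leafScope E x) i ∧ y ∈ leafScope E x) ∨
       (∃ j, j < i ∧ minAt σ (IS j) i ∧ y ∈ IS j)) := by
  rw [hIS i]
  simp only [Finset.mem_erase, Finset.mem_union, Finset.mem_biUnion, Finset.mem_filter,
    Finset.mem_univ, true_and]
  constructor
  · rintro ⟨hne, h | h⟩
    · obtain ⟨x, hx, hy⟩ := h; exact ⟨hne, Or.inl ⟨x, hx, hy⟩⟩
    · obtain ⟨j, ⟨hj, hm⟩, hy⟩ := h; exact ⟨hne, Or.inr ⟨j, hj, hm, hy⟩⟩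
  · rintro ⟨hne, h | h⟩
    · obtain ⟨x, hx, hy⟩ := h; exact ⟨hne, Or.inl ⟨x, hx, hy⟩⟩
    · obtain ⟨j, hj, hm, hy⟩ := h; exact ⟨hne, Or.inr ⟨j, ⟨hj, hm⟩, hy⟩⟩

lemma lt_of_mem_IS (hIS : elimRec E σ IS) {i : Fin n} {y : X} (hy : y ∈ IS i) :
    i < σ.symm y := by
  obtain ⟨hne, h⟩ := (mem_IS_iff hIS i y).1 hy
  have hle : i ≤ σ.symm y := by
    rcases h with ⟨x, hx, hyx⟩ | ⟨j, _, hj, hyj⟩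
    · exact hx.2 (σ.symm y) (by rwa [Equiv.apply_symm_apply])
    · exact hj.2 (σ.symm y) (by rwa [Equiv.apply_symm_apply])
  refine lt_of_le_of_ne hle ?_
  intro h
  exact hne (by rw [h, Equiv.apply_symm_apply])

lemma reach_internal (hIS : elimRec E σ IS) :
    ∀ k : ℕ, ∀ i : Fin n, n - (i : ℕ) ≤ k → ∀ y, y ∈ IS i →
      (elimGraph E σ IS).Reachable (Sum.inr i) (Sum.inr (σ.symm y)) := by
  intro k
  induction k with
  | zero =>
    intro i hi y hy
    have := i.isLt; omega
  | succ k ih =>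
    intro i hi y hy
    obtain ⟨m, hm⟩ := minAt_exists σ ⟨y, hy⟩
    have him : i < m := by
      have := lt_of_mem_IS hIS hm.1
      simpa using this
    have hadj : (elimGraph E σ IS).Adj (Sum.inr i) (Sum.inr m) :=
      ⟨by simp [Fin.ne_of_lt him], Or.inl ⟨him, hm⟩⟩
    have hmy : m ≤ σ.symm y := hm.2 _ (by rwa [Equiv.apply_symm_apply])
    rcases eq_or_lt_of_le hmy with heq | hlt
    · rw [← heq]; exact hadj.reachable
    · have hy' : y ∈ IS m := by
        rw [mem_IS_iff hIS]
        refine ⟨fun h => ?_, Or.inr ⟨i, him, hm, hy⟩⟩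
        · rw [h, Equiv.symm_apply_apply] at hlt; exact lt_irrefl _ hlt
      have hmn := m.isLt
      have hlt' : (i : ℕ) < (m : ℕ) := him
      exact hadj.reachable.trans (ih m (by omega) y hy')

lemma reach_leaf (hIS : elimRec E σ IS) (x : X) {y : X} (hy : y ∈ leafScope E x) :
    (elimGraph E σ IS).Reachable (Sum.inl x) (Sum.inr (σ.symm y)) := by
  obtain ⟨m, hm⟩ := minAt_exists σ (⟨y, hy⟩ : (leafScope E x).Nonempty)
  have hadj : (elimGraph E σ IS).Adj (Sum.inl x) (Sum.inr m) :=
    ⟨by simp, Or.inl hm⟩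
  have hmy : m ≤ σ.symm y := hm.2 _ (by rwa [Equiv.apply_symm_apply])
  rcases eq_or_lt_of_le hmy with heq | hlt
  · rw [← heq]; exact hadj.reachable
  · have hy' : y ∈ IS m := by
      rw [mem_IS_iff hIS]
      refine ⟨fun h => ?_, Or.inl ⟨x, hm, hy⟩⟩
      · rw [h, Equiv.symm_apply_apply] at hlt; exact lt_irrefl _ hlt
    exact hadj.reachable.trans (reach_internal hIS n m (by omega) y hy')

lemma bn_reach_of_mem_leafScope (hacyc : ∀ x, ¬ Relation.TransGen E x x)
    {x y : X} (hy : y ∈ leafScope E x) : (bnGraph E).Reachable x y := by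
  rcases Finset.mem_insert.mp hy with rfl | h
  · exact Reachable.refl _
  · have hE : E y x := (Finset.mem_filter.mp h).2
    have hne : y ≠ x := fun h => hacyc x (Relation.TransGen.single (h ▸ hE))
    exact (Adj.reachable (⟨hne, Or.inl hE⟩ : (bnGraph E).Adj y x)).symm

lemma bn_reach_IS (hacyc : ∀ x, ¬ Relation.TransGen E x x) (hIS : elimRec E σ IS) :
    ∀ k : ℕ, ∀ i : Fin n, (i : ℕ) ≤ k → ∀ y, y ∈ IS i →
      (bnGraph E).Reachable (σ i) y := by
  intro k
  induction k with
  | zero =>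
    intro i hi y hy
    obtain ⟨_, h⟩ := (mem_IS_iff hIS i y).1 hy
    rcases h with ⟨x, hx, hyx⟩ | ⟨j, hj, _, _⟩
    · exact (bn_reach_of_mem_leafScope hacyc hx.1).symm.trans
        (bn_reach_of_mem_leafScope hacyc hyx)
    · have : (j : ℕ) < (i : ℕ) := hj
      omega
  | succ k ih =>
    intro i hi y hy
    obtain ⟨_, h⟩ := (mem_IS_iff hIS i y).1 hy
    rcases h with ⟨x, hx, hyx⟩ | ⟨j, hj, hmj, hyj⟩
    · exact (bn_reach_of_mem_leafScope hacyc hx.1).symm.trans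
        (bn_reach_of_mem_leafScope hacyc hyx)
    · have hji : (j : ℕ) < (i : ℕ) := hj
      exact (ih j (by omega) (σ i) hmj.1).symm.trans (ih j (by omega) y hyj)

lemma bn_step (hacyc : ∀ x, ¬ Relation.TransGen E x x) (hIS : elimRec E σ IS)
    {a b : X ⊕ Fin n} (h : (elimGraph E σ IS).Adj a b) :
    (bnGraph E).Reachable (Sum.elim id σ a) (Sum.elim id σ b) := by
  obtain ⟨hne, h | h⟩ := h
  · cases a with
    | inl x =>
      cases b with
      | inl y => exact absurd h (by simp [elimEdge])
      | inr i =>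
        exact bn_reach_of_mem_leafScope hacyc h.1
    | inr j =>
      cases b with
      | inl y => exact absurd h (by simp [elimEdge])
      | inr i =>
        exact bn_reach_IS hacyc hIS n j (by have := j.isLt; omega) (σ i) h.2.1
  · cases a with
    | inl x =>
      cases b with
      | inl y => exact absurd h (by simp [elimEdge])
      | inr i => exact absurd h (by simp [elimEdge])
    | inr j =>
      cases b with
      | inl y =>
        exact (bn_reach_of_mem_leafScope hacyc h.1).symm
      | inr i =>
        exact (bn_reach_IS hacyc hIS n i (by have := i.isLt; omega) (σ j) h.2.1).symm

lemma elim_reach_to_bn (hacyc : ∀ x, ¬ Relation.TransGen E x x) (hIS : elimRec E σ IS)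
    {a b : X ⊕ Fin n} (h : (elimGraph E σ IS).Reachable a b) :
    (bnGraph E).Reachable (Sum.elim id σ a) (Sum.elim id σ b) := by
  obtain ⟨w⟩ := h
  induction w with
  | nil => exact Reachable.refl _
  | cons hadj p ih => exact (bn_step hacyc hIS hadj).trans ih

lemma elim_step (hIS : elimRec E σ IS) {x y : X} (h : (bnGraph E).Adj x y) :
    (elimGraph E σ IS).Reachable (Sum.inl x) (Sum.inl y) := by
  have self : ∀ z : X, (elimGraph E σ IS).Reachable (Sum.inl z) (Sum.inr (σ.symm z)) :=
    fun z => reach_leaf hIS z (Finset.mem_insert_self z _)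
  obtain ⟨hne, hE | hE⟩ := h
  · -- E x y : x is a parent of y, so x ∈ leafScope E y
    have hx : x ∈ leafScope E y := Finset.mem_insert_of_mem (by simp [hE])
    exact (self x).trans (reach_leaf hIS y hx).symm
  · have hy : y ∈ leafScope E x := Finset.mem_insert_of_mem (by simp [hE])
    exact (reach_leaf hIS x hy).trans (self y).symm

lemma bn_reach_to_elim (hIS : elimRec E σ IS) {x y : X}
    (h : (bnGraph E).Reachable x y) :
    (elimGraph E σ IS).Reachable (Sum.inl x) (Sum.inl y) := by
  obtain ⟨w⟩ := h
  induction w with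
  | nil => exact Reachable.refl _
  | cons hadj p ih => exact (elim_step hIS hadj).trans ih

/-- rank: leaves at 0, internal node i at i+1 -/
def elimRank : X ⊕ Fin n → ℕ := Sum.elim (fun _ => 0) (fun i => (i : ℕ) + 1)

lemma edge_rank {a b : X ⊕ Fin n} (h : elimEdge E σ IS a b) :
    elimRank a < elimRank b := by
  cases a with
  | inl x =>
    cases b with
    | inl y => exact absurd h (by simp [elimEdge])
    | inr i => simp [elimRank]
  | inr j =>
    cases b with
    | inl y => exact absurd h (by simp [elimEdge])
    | inr i =>
      have : (j : ℕ) < (i : ℕ) := h.1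
      simp [elimRank]; omega

lemma edge_unique {a b c : X ⊕ Fin n} (h1 : elimEdge E σ IS a b)
    (h2 : elimEdge E σ IS a c) : b = c := by
  cases a with
  | inl x =>
    cases b with
    | inl y => exact absurd h1 (by simp [elimEdge])
    | inr i =>
      cases c with
      | inl y => exact absurd h2 (by simp [elimEdge])
      | inr i' => exact congrArg Sum.inr (minAt_unique h1 h2)
  | inr j =>
    cases b with
    | inl y => exact absurd h1 (by simp [elimEdge])
    | inr i =>
      cases c with
      | inl y => exact absurd h2 (by simp [elimEdge])
      | inr i' => exact congrArg Sum.inr (minAt_unique h1.2 h2.2)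

lemma exists_last_edge {V : Type*} {G : SimpleGraph V} :
    ∀ {w u : V} (p : G.Walk w u), w ≠ u →
      ∃ b, b ∈ p.support ∧ G.Adj b u ∧ s(b, u) ∈ p.edges := by
  intro w u p
  induction p with
  | nil => intro h; exact absurd rfl h
  | @cons a c u h q ih =>
    intro _
    by_cases hcu : c = u
    · subst hcu
      exact ⟨a, by simp, h, by simp⟩
    · obtain ⟨b, hb1, hb2, hb3⟩ := ih hcu
      exact ⟨b, by simp [hb1], hb2, by simp [hb3]⟩

lemma elim_acyclic : (elimGraph E σ IS).IsAcyclic := by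
  intro v c hc
  obtain ⟨u, hu, humin⟩ := Finset.exists_min_image c.support.toFinset elimRank
    ⟨v, by simp [c.start_mem_support]⟩
  rw [List.mem_toFinset] at hu
  have key : ∀ (c' : (elimGraph E σ IS).Walk u u), c'.IsCycle →
      (∀ a, a ∈ c'.support → elimRank u ≤ elimRank a) → False := by
    intro c' hc' hmin
    cases c' with
    | nil => exact Walk.IsCycle.not_of_nil hc'
    | @cons _ w _ hadj p =>
      rw [Walk.cons_isCycle_iff] at hc'
      obtain ⟨hp, hedge⟩ := hc'
      have hwu : w ≠ u := hadj.ne'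
      obtain ⟨b, hb, hbadj, hbedge⟩ := exists_last_edge p hwu
      have hbsup : elimRank u ≤ elimRank b :=
        hmin b (by simp [Walk.support_cons, hb])
      have hwsup : elimRank u ≤ elimRank w :=
        hmin w (by simp [Walk.support_cons, p.start_mem_support])
      have h1 : elimEdge E σ IS u w := by
        rcases hadj.2 with h | h
        · exact h
        · exact absurd (edge_rank h) (by omega)
      have h2 : elimEdge E σ IS u b := by
        rcases hbadj.2 with h | h
        · exact absurd (edge_rank h) (by omega)
        · exact h
      have hwb : w = b := edge_unique h1 h2
      subst hwb
      exact hedge (by rwa [Sym2.eq_swap])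
  apply key (c.rotate u hu) (hc.rotate hu)
  intro a ha
  rcases (Walk.mem_support_iff _).1 ha with rfl | ha'
  · exact le_refl _
  · have hmem : a ∈ c.support.tail := (Walk.support_rotate c u hu).mem_iff.1 ha'
    exact humin a (List.mem_toFinset.2 (List.mem_of_mem_tail hmem))

end ProofAux



/-- for every Bayesian network (a finite DAG `E` on a nonempty
variable set `X`) and every elimination order `σ`, the elimination graph of
`(E, σ)` (whose internal scopes `IS` satisfy the construction recurrence) is a
tree — its underlying undirected graph is connected and acyclic — if and only
if `E` is weakly connected. -/
theorem elimination_graph_tree_iff_weakly_connected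
    {X : Type*} [Fintype X] [DecidableEq X] [Nonempty X]
    (E : X → X → Prop) (hacyc : ∀ x, ¬ Relation.TransGen E x x)
    (σ : Fin (Fintype.card X) ≃ X)
    (IS : Fin (Fintype.card X) → Finset X)
    (hIS : elimRec E σ IS) :
    (elimGraph E σ IS).IsTree ↔ (bnGraph E).Connected := by

  constructor
  · intro ht
    refine ⟨fun x y => ?_⟩
    exact elim_reach_to_bn hacyc hIS (ht.isConnected.preconnected (Sum.inl x) (Sum.inl y))
  · intro hconn
    refine ⟨⟨fun a b => ?_⟩, elim_acyclic⟩
    have key : ∀ a : X ⊕ Fin (Fintype.card X),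
        (elimGraph E σ IS).Reachable a (Sum.inl (Sum.elim id σ a)) := by
      intro a
      cases a with
      | inl x => exact SimpleGraph.Reachable.refl _
      | inr i =>
        have h := reach_leaf hIS (σ i) (Finset.mem_insert_self (σ i) _)
        rw [Equiv.symm_apply_apply] at h
        exact h.symm
    exact ((key a).trans (bn_reach_to_elim hIS
      (hconn.preconnected (Sum.elim id σ a) (Sum.elim id σ b)))).trans (key b).symm
end
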